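/- For a C-source M/G/1/1 queue with source-aware preemption, solving the linear system H(q_0)=1, H(q_{c'}) = p_{c'} E[e^{sη_{c'}}](H(q_0) + H(q'_0)) + p'_{c'} E[e^{sη'_{c'}}] H(q_{c'}) for all c', H(q'_0) = Σ_{c'≠c} p̄_{c'} E[e^{sη̄_{c'}}] H(q_{c'}), and H(q̄_0) = p̄_c E[e^{sη̄_c}] H(q_c), yields H(q̄_0) = (p_c E[e^{sη_c}] p̄_c E[e^{sη̄_c}]) / ((1 − p'_c E[e^{sη'_c}])(1 − Σ_{c'≠c} p_{c'} E[e^{sη_{c'}}] p̄_{c'} E[e^{sη̄_{c'}}]/(1 − p'_{c'} E[e^{sη'_{c'}}]))). -/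

import Mathlib

open Finset

/-- Solving the linear system of transfer functions for the semi-Markov chain of the
source-aware preemptive policy. With `a c' = p_{c'} E[e^{sη_{c'}}]`,
`b c' = p̄_{c'} E[e^{sη̄_{c'}}]`, `d c' = p'_{c'} E[e^{sη'_{c'}}]`, the system
`H(q_0) = 1`, `H(q_{c'}) = a c' * (H(q_0) + H(q'_0)) + d c' * H(q_{c'})`,
`H(q'_0) = Σ_{c' ≠ c} b c' * H(q_{c'})`, `H(q̄_0) = b c * H(q_c)` yields the stated
closed form for `H(q̄_0)`. -/
theorem transfer_function_solution (C : ℕ) (c : Fin C) (a b d : Fin C → ℝ)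
    (H0 H0' Hbar : ℝ) (Hq : Fin C → ℝ)
    (hd : ∀ c', d c' ≠ 1)
    (hden : 1 - ∑ c' ∈ univ.erase c, a c' * b c' / (1 - d c') ≠ 0)
    (hH0 : H0 = 1)
    (hHq : ∀ c', Hq c' = a c' * (H0 + H0') + d c' * Hq c')
    (hH0' : H0' = ∑ c' ∈ univ.erase c, b c' * Hq c')
    (hHbar : Hbar = b c * Hq c) :
    Hbar = a c * b c /
      ((1 - d c) * (1 - ∑ c' ∈ univ.erase c, a c' * b c' / (1 - d c'))) := by
  have hd' : ∀ c', (1:ℝ) - d c' ≠ 0 := fun c' => sub_ne_zero.mpr (fun h => hd c' h.symm)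
  have hq : ∀ c', Hq c' = a c' * (1 + H0') / (1 - d c') := by
    intro c'
    have := hHq c'
    rw [hH0] at this
    rw [eq_div_iff (hd' c')]
    linarith [this]
  set S : ℝ := ∑ c' ∈ univ.erase c, a c' * b c' / (1 - d c') with hS
  have hS' : H0' = S * (1 + H0') := by
    calc H0' = ∑ c' ∈ univ.erase c, b c' * Hq c' := hH0'
      _ = ∑ c' ∈ univ.erase c, a c' * b c' / (1 - d c') * (1 + H0') := by
          refine Finset.sum_congr rfl fun c' _ => ?_
          rw [hq c']
          field_simp
      _ = S * (1 + H0') := by rw [hS, Finset.sum_mul]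
  have h1 : 1 + H0' = 1 / (1 - S) := by
    have hne : (1:ℝ) - S ≠ 0 := hden
    field_simp
    linarith [hS']
  rw [hHbar, hq c, h1]
  field_simp
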